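/- With H exponential(1), X_1,...,X_{n-1} i.i.d. truncated exponential on [0,α] with density e^{-x}/(1-e^{-α}), all independent, and constants θ, P_T, P_J, σ² > 0 with K = θP_J/P_T, the probability P(P_T·H ≥ θ(P_J·(X_1+...+X_{n-1}) + σ²)) equals exp(-θσ²/P_T) · ((1 - e^{-α(1+K)}) / ((1+K)(1 - e^{-α})))^{n-1}. -/

import Mathlib

open MeasureTheory ProbabilityTheory Real Set

section Aux

variable {Ω : Type*} [MeasurableSpace Ω] {μ : Measure Ω}

/-- Restriction of an independent family along an injective reindexing. -/
lemma iIndepFun_precomp_of_injective {ι κ β : Type*} [mβ : MeasurableSpace β]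
    {f : κ → Ω → β} (h : iIndepFun f μ) {g : ι → κ}
    (hg : Function.Injective g) :
    iIndepFun (fun i => f (g i)) μ := by
  classical
  rw [iIndepFun_iff_measure_inter_preimage_eq_mul] at h ⊢
  intro S sets hsets
  set sets' : κ → Set β := fun k =>
    if hk : ∃ j ∈ S, g j = k then sets hk.choose else Set.univ with hsets'def
  have hval : ∀ i ∈ S, sets' (g i) = sets i := by
    intro i hi
    have hk : ∃ j ∈ S, g j = g i := ⟨i, hi, rfl⟩
    simp only [hsets'def, dif_pos hk]
    exact congrArg sets (hg hk.choose_spec.2)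
  have key := h (S.map ⟨g, hg⟩) (sets := sets') ?_
  · have hInter : (⋂ k ∈ S.map ⟨g, hg⟩, f k ⁻¹' sets' k) = ⋂ i ∈ S, f (g i) ⁻¹' sets i := by
      ext ω
      simp only [Set.mem_iInter, Finset.mem_map, Function.Embedding.coeFn_mk]
      constructor
      · intro hall i hi
        have := hall (g i) ⟨i, hi, rfl⟩
        rwa [hval i hi] at this
      · rintro hall k ⟨i, hi, rfl⟩
        rw [hval i hi]; exact hall i hi
    have hProd : (∏ k ∈ S.map ⟨g, hg⟩, μ (f k ⁻¹' sets' k)) =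
        ∏ i ∈ S, μ (f (g i) ⁻¹' sets i) := by
      rw [Finset.prod_map]
      exact Finset.prod_congr rfl fun i hi => by
        simp only [Function.Embedding.coeFn_mk, hval i hi]
    rw [hInter, hProd] at key
    exact key
  · intro k hk
    rw [Finset.mem_map] at hk
    obtain ⟨i, hi, rfl⟩ := hk
    simp only [Function.Embedding.coeFn_mk]
    rw [hval i hi]
    exact hsets i hi

/-- Tail of the exponential distribution. -/
lemma expMeasure_one_Ici {y : ℝ} (hy : 0 ≤ y) :
    expMeasure 1 (Ici y) = ENNReal.ofReal (Real.exp (-y)) := by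
  have hprob : IsProbabilityMeasure (expMeasure 1) := isProbabilityMeasure_expMeasure one_pos
  have hwd : expMeasure 1 = volume.withDensity (exponentialPDF 1) := rfl
  have hexp_le : Real.exp (-y) ≤ 1 := exp_le_one_iff.mpr (neg_nonpos.mpr hy)
  have hIic : expMeasure 1 (Iic y) = ENNReal.ofReal (1 - Real.exp (-y)) := by
    rw [hwd, withDensity_apply _ measurableSet_Iic,
      lintegral_exponentialPDF_eq_antiDeriv one_pos, if_pos hy, one_mul]
  have hsingleton : expMeasure 1 {y} = 0 := by
    rw [hwd, withDensity_apply _ (measurableSet_singleton y),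
      Measure.restrict_eq_zero.mpr (Real.volume_singleton), lintegral_zero_measure]
  have hIoi : expMeasure 1 (Ioi y) = ENNReal.ofReal (Real.exp (-y)) := by
    have hc := measure_compl (μ := expMeasure 1) measurableSet_Iic (measure_ne_top _ (Iic y))
    rw [compl_Iic] at hc
    rw [hc, hIic, measure_univ, ← ENNReal.ofReal_one,
      ← ENNReal.ofReal_sub _ (by linarith)]
    norm_num
  apply le_antisymm
  · have hIci : Ici y = {y} ∪ Ioi y := by rw [Set.singleton_union, Set.Ioi_insert]
    rw [hIci]
    refine le_trans (measure_union_le _ _) ?_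
    rw [hsingleton, zero_add, hIoi]
  · rw [← hIoi]; exact measure_mono Ioi_subset_Ici_self

end Aux

/-- With `H` exponential(1), `X 1, ..., X (n-1)` i.i.d. truncated exponential on `[0, α]`,
all independent, `K = θ * P_J / P_T`, the probability
`P(P_T * H ≥ θ * (P_J * (X 1 + ... + X (n-1)) + σ²))` equals
`exp (-θσ²/P_T) * ((1 - exp (-α(1+K))) / ((1+K)(1 - exp (-α))))^(n-1)`. -/
theorem sir_success_probability_RRS
    {Ω : Type*} [MeasurableSpace Ω] (μ : Measure Ω) [IsProbabilityMeasure μ]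
    (n : ℕ) (hn : 1 ≤ n)
    (H : Ω → ℝ) (X : Fin (n - 1) → Ω → ℝ)
    (hH : Measurable H) (hX : ∀ i, Measurable (X i))
    (hHexp : Measure.map H μ = expMeasure 1)
    (α : ℝ) (hα : 0 < α)
    (hXdist : ∀ i, Measure.map (X i) μ =
      volume.withDensity (fun x => ENNReal.ofReal
        (if x ∈ Icc 0 α then Real.exp (-x) / (1 - Real.exp (-α)) else 0)))
    (hindep : iIndepFun
      (fun o : Option (Fin (n - 1)) => Option.elim o H X) μ)
    (θ P_T P_J σ2 : ℝ) (hθ : 0 < θ) (hPT : 0 < P_T) (hPJ : 0 < P_J) (hσ : 0 < σ2)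
    (K : ℝ) (hK : K = θ * P_J / P_T) :
    (μ {ω | θ * (P_J * (∑ i, X i ω) + σ2) ≤ P_T * H ω}).toReal =
      Real.exp (-θ * σ2 / P_T) *
        ((1 - Real.exp (-α * (1 + K))) / ((1 + K) * (1 - Real.exp (-α)))) ^ (n - 1) := by
  classical
  have hEprob : IsProbabilityMeasure (expMeasure 1) := isProbabilityMeasure_expMeasure one_pos
  have hKpos : 0 < K := by rw [hK]; positivity
  have h1K : (0:ℝ) < 1 + K := by linarith
  have hea : Real.exp (-α) < 1 := exp_lt_one_iff.mpr (by linarith)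
  have h1ea : (0:ℝ) < 1 - Real.exp (-α) := by linarith
  set a : ℝ := θ * σ2 / P_T with ha
  have hapos : 0 < a := by positivity
  set S : Ω → ℝ := fun ω => ∑ i, X i ω with hSdef
  have hSmeas : Measurable S := Finset.measurable_sum _ fun i _ => hX i
  set Y : Ω → ℝ := fun ω => a + K * S ω with hYdef
  have hYmeas : Measurable Y := measurable_const.add (measurable_const.mul hSmeas)
  -- rewrite the event
  have hset : {ω | θ * (P_J * (∑ i, X i ω) + σ2) ≤ P_T * H ω} = {ω | Y ω ≤ H ω} := by
    ext ω
    simp only [mem_setOf_eq, hYdef, hSdef]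
    have hval : a + K * ∑ i, X i ω = θ * (P_J * (∑ i, X i ω) + σ2) / P_T := by
      rw [ha, hK]; field_simp; ring
    rw [hval, div_le_iff₀ hPT, mul_comm (H ω) P_T]
  -- each X i lies in [0, α] a.e.
  have hX_ae : ∀ i, ∀ᵐ ω ∂μ, X i ω ∈ Icc 0 α := by
    intro i
    rw [ae_iff]
    have : {ω | ¬ X i ω ∈ Icc 0 α} = X i ⁻¹' (Icc 0 α)ᶜ := rfl
    rw [this, ← Measure.map_apply (hX i) (measurableSet_Icc.compl), hXdist i,
      withDensity_apply _ measurableSet_Icc.compl]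
    have hz : ∫⁻ x in (Icc 0 α)ᶜ, ENNReal.ofReal
        (if x ∈ Icc 0 α then Real.exp (-x) / (1 - Real.exp (-α)) else 0) ∂volume =
        ∫⁻ _ in (Icc 0 α)ᶜ, (0:ENNReal) ∂volume :=
      setLIntegral_congr_fun measurableSet_Icc.compl
        (fun x (hx : x ∈ (Icc 0 α)ᶜ) => by
          simp only [if_neg hx, ENNReal.ofReal_zero])
    rw [hz, lintegral_zero]
  have hY_ae : ∀ᵐ ω ∂μ, 0 ≤ Y ω := by
    have hall : ∀ᵐ ω ∂μ, ∀ i, X i ω ∈ Icc 0 α := ae_all_iff.mpr hX_ae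
    filter_upwards [hall] with ω hω
    have hS0 : 0 ≤ S ω := Finset.sum_nonneg fun i _ => (hω i).1
    have : 0 ≤ K * S ω := mul_nonneg hKpos.le hS0
    simp only [hYdef]; linarith
  -- independence of Y and H
  have hf_meas : ∀ o : Option (Fin (n - 1)),
      Measurable (Option.elim o H X) := by rintro (_ | i); exacts [hH, hX i]
  have hXindep : iIndepFun X μ :=
    iIndepFun_precomp_of_injective hindep (Option.some_injective _)
  have hYH : IndepFun Y H μ := by
    have hnone : (none : Option (Fin (n - 1))) ∉
        Finset.univ.map ⟨some, Option.some_injective _⟩ := by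
      simp
    have hind := hindep.indepFun_finsetSum_of_notMem hf_meas hnone
    have hsum : (∑ j ∈ Finset.univ.map ⟨some, Option.some_injective _⟩,
        Option.elim j H X) = S := by
      rw [Finset.sum_map]
      funext ω
      simp only [Finset.sum_apply, Function.Embedding.coeFn_mk, Option.elim, hSdef]
    rw [hsum] at hind
    have := hind.comp (φ := fun x : ℝ => a + K * x) (ψ := id)
      (measurable_const.add (measurable_const.mul measurable_id)) measurable_id
    exact this
  -- probability as a lintegral
  have hjoint : μ.map (fun ω => (Y ω, H ω)) = (μ.map Y).prod (expMeasure 1) := by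
    rw [← hHexp]
    exact (indepFun_iff_map_prod_eq_prod_map_map hYmeas.aemeasurable
      hH.aemeasurable).mp hYH
  have hν_ae : ∀ᵐ y ∂(μ.map Y), 0 ≤ y := by
    rw [ae_iff]
    have : {y : ℝ | ¬ 0 ≤ y} = Iio 0 := by ext y; simp
    rw [this, Measure.map_apply hYmeas measurableSet_Iio]
    rw [ae_iff] at hY_ae
    convert hY_ae using 2
    ext ω; simp
  have h1 : μ {ω | Y ω ≤ H ω} = ∫⁻ ω, ENNReal.ofReal (Real.exp (-Y ω)) ∂μ := by
    have hms : MeasurableSet {p : ℝ × ℝ | p.1 ≤ p.2} :=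
      measurableSet_le measurable_fst measurable_snd
    calc μ {ω | Y ω ≤ H ω}
        = μ.map (fun ω => (Y ω, H ω)) {p : ℝ × ℝ | p.1 ≤ p.2} := by
          rw [Measure.map_apply (hYmeas.prodMk hH) hms]; rfl
      _ = ((μ.map Y).prod (expMeasure 1)) {p : ℝ × ℝ | p.1 ≤ p.2} := by rw [hjoint]
      _ = ∫⁻ y, expMeasure 1 (Ici y) ∂(μ.map Y) := by
          rw [Measure.prod_apply hms]; rfl
      _ = ∫⁻ y, ENNReal.ofReal (Real.exp (-y)) ∂(μ.map Y) := by
          refine lintegral_congr_ae ?_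
          filter_upwards [hν_ae] with y hy
          exact expMeasure_one_Ici hy
      _ = ∫⁻ ω, ENNReal.ofReal (Real.exp (-Y ω)) ∂μ := by
          exact lintegral_map
            (f := fun y : ℝ => ENNReal.ofReal (Real.exp (-y)))
            (ENNReal.measurable_ofReal.comp (Real.measurable_exp.comp measurable_neg)) hYmeas
  -- pass to a Bochner integral
  have h2 : (μ {ω | Y ω ≤ H ω}).toReal = ∫ ω, Real.exp (-Y ω) ∂μ := by
    rw [h1, integral_eq_lintegral_of_nonneg_ae (f := fun ω => Real.exp (-Y ω)) (ae_of_all _ fun ω => (exp_pos _).le)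
      ((measurable_exp.comp hYmeas.neg).aestronglyMeasurable)]
  -- factor the exponential
  have h3 : ∫ ω, Real.exp (-Y ω) ∂μ =
      Real.exp (-a) * ∫ ω, Real.exp (-K * S ω) ∂μ := by
    have : ∀ ω, Real.exp (-Y ω) = Real.exp (-a) * Real.exp (-K * S ω) := by
      intro ω
      rw [← Real.exp_add]
      congr 1
      simp only [hYdef]; ring
    simp_rw [this]
    exact integral_const_mul _ _
  -- the integral over independent variables
  have h4 : ∫ ω, Real.exp (-K * S ω) ∂μ = ∏ i, mgf (X i) μ (-K) := by
    have hmg := hXindep.mgf_sum (t := -K) hX Finset.univ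
    rw [← hmg, mgf]
    congr 1
    funext ω
    simp only [hSdef, Finset.sum_apply]
  -- value of each factor
  set c : ℝ := (1 - Real.exp (-α * (1 + K))) / ((1 + K) * (1 - Real.exp (-α))) with hc
  have h5 : ∀ i, mgf (X i) μ (-K) = c := by
    intro i
    have hmgfi : mgf (X i) μ (-K) = ∫ x, Real.exp (-K * x) ∂(μ.map (X i)) := by
      rw [mgf]
      exact (integral_map (φ := X i) (f := fun x : ℝ => Real.exp (-K * x)) (hX i).aemeasurable
        ((Real.measurable_exp.comp (measurable_id.const_mul (-K))).aestronglyMeasurable)).symm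
    set f₀ : ℝ → ℝ := fun x => if x ∈ Icc 0 α then Real.exp (-x) / (1 - Real.exp (-α)) else 0
      with hf₀
    have hf₀meas : Measurable f₀ := by
      refine Measurable.ite measurableSet_Icc ?_ measurable_const
      exact (measurable_exp.comp measurable_neg).div_const _
    have hf₀nonneg : ∀ x, 0 ≤ f₀ x := by
      intro x
      simp only [hf₀]
      split_ifs
      · positivity
      · exact le_rfl
    have hwd : (volume.withDensity fun x => ENNReal.ofReal (f₀ x)) =
        volume.withDensity fun x => ((f₀ x).toNNReal : ENNReal) := rfl
    have hint : ∫ x, Real.exp (-K * x) ∂(volume.withDensity fun x => ENNReal.ofReal (f₀ x)) =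
        ∫ x, f₀ x * Real.exp (-K * x) := by
      rw [hwd, integral_withDensity_eq_integral_smul hf₀meas.real_toNNReal]
      congr 1
      funext x
      rw [NNReal.smul_def, Real.coe_toNNReal _ (hf₀nonneg x), smul_eq_mul]
    have hindic : (fun x => f₀ x * Real.exp (-K * x)) =
        Set.indicator (Icc 0 α)
          (fun x => Real.exp (-x) / (1 - Real.exp (-α)) * Real.exp (-K * x)) := by
      funext x
      simp only [hf₀, Set.indicator_apply]
      split_ifs <;> simp
    have hJ : ∫ x in (0:ℝ)..α, (1 + K) * Real.exp (-((1 + K) * x)) =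
        1 - Real.exp (-((1 + K) * α)) := by
      rw [intervalIntegral.integral_eq_sub_of_hasDerivAt
        (f := fun x => -Real.exp (-((1 + K) * x)))
        (fun x _ => hasDerivAt_neg_exp_mul_exp)]
      · simp [Real.exp_zero]; ring
      · apply Continuous.intervalIntegrable
        exact continuous_const.mul ((continuous_const.mul continuous_id).neg.rexp)
    have hJ' : ∫ x in (0:ℝ)..α, Real.exp (-((1 + K) * x)) =
        (1 - Real.exp (-((1 + K) * α))) / (1 + K) := by
      rw [← hJ, intervalIntegral.integral_const_mul]
      field_simp
    calc mgf (X i) μ (-K)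
        = ∫ x, Real.exp (-K * x) ∂(μ.map (X i)) := hmgfi
      _ = ∫ x, f₀ x * Real.exp (-K * x) := by rw [hXdist i]; exact hint
      _ = ∫ x in Icc 0 α, Real.exp (-x) / (1 - Real.exp (-α)) * Real.exp (-K * x) := by
          rw [hindic, integral_indicator measurableSet_Icc]
      _ = ∫ x in (0:ℝ)..α, Real.exp (-x) / (1 - Real.exp (-α)) * Real.exp (-K * x) := by
          rw [integral_Icc_eq_integral_Ioc, ← intervalIntegral.integral_of_le hα.le]
      _ = (1 - Real.exp (-α))⁻¹ * ∫ x in (0:ℝ)..α, Real.exp (-((1 + K) * x)) := by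
          rw [← intervalIntegral.integral_const_mul]
          refine intervalIntegral.integral_congr fun x _ => ?_
          rw [div_mul_eq_mul_div, ← Real.exp_add, div_eq_inv_mul]
          congr 2
          ring
      _ = c := by
          rw [hJ', hc, show -((1 + K) * α) = -α * (1 + K) by ring,
            inv_mul_eq_div, div_div]
  -- assemble
  rw [hset, h2, h3, h4]
  have hprod : (∏ i, mgf (X i) μ (-K)) = c ^ (n - 1) := by
    simp only [h5]
    rw [Finset.prod_const, Finset.card_univ, Fintype.card_fin]
  rw [hprod, hc]
  congr 1
  rw [ha]
  congr 1
  ring
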